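/- For a real random variable Z with E|Z| < ∞ and α ∈ (0,1), the function t ↦ t + (1/(1-α)) E[(Z - t)_+] is convex on R, and its infimum over t ∈ R equals the Expected Shortfall ES_α(Z) = (1/(1-α)) ∫_α^1 F_Z^{-1}(u) du; moreover the infimum is attained at t = F_Z^{-1}(α) (the left α-quantile of Z). -/

import Mathlib

open MeasureTheory Filter Topology

lemma quantile_aux (ν : Measure ℝ) [IsProbabilityMeasure ν] {u : ℝ} (hu0 : 0 < u) (hu1 : u < 1) :
    BddBelow {y : ℝ | u ≤ (ν (Set.Iic y)).toReal} ∧ {y : ℝ | u ≤ (ν (Set.Iic y)).toReal}.Nonempty ∧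
    ∀ s, (sInf {y : ℝ | u ≤ (ν (Set.Iic y)).toReal} ≤ s ↔ u ≤ (ν (Set.Iic s)).toReal) := by
  have hFeq : (fun y : ℝ => (ν (Set.Iic y)).toReal) = fun y => ProbabilityTheory.cdf ν y :=
    funext fun y => (ProbabilityTheory.cdf_eq_real ν y).symm
  set F : ℝ → ℝ := fun y => (ν (Set.Iic y)).toReal with hF
  have hmono : Monotone F := fun a b hab =>
    ENNReal.toReal_mono (measure_ne_top _ _) (measure_mono (Set.Iic_subset_Iic.2 hab))
  have htop : Tendsto F atTop (𝓝 1) := by rw [hFeq]; exact ProbabilityTheory.tendsto_cdf_atTop ν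
  have hbot : Tendsto F atBot (𝓝 0) := by rw [hFeq]; exact ProbabilityTheory.tendsto_cdf_atBot ν
  obtain ⟨y₁, hy₁⟩ := (htop.eventually (eventually_gt_nhds hu1)).exists
  obtain ⟨y₀, hy₀⟩ := (hbot.eventually (eventually_lt_nhds hu0)).exists
  have hne : {y | u ≤ F y}.Nonempty := ⟨y₁, hy₁.le⟩
  have hbdd : BddBelow {y | u ≤ F y} :=
    ⟨y₀, fun y hy => not_lt.1 fun h => absurd (hy.trans (hmono h.le)) (not_le.2 hy₀)⟩
  refine ⟨hbdd, hne, fun s => ⟨fun h => ?_, fun h => csInf_le hbdd h⟩⟩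
  have hrc : Tendsto F (𝓝[>] (sInf {y | u ≤ F y})) (𝓝 (F (sInf {y | u ≤ F y}))) := by
    have h1 := ((ProbabilityTheory.cdf ν).right_continuous (sInf {y | u ≤ F y})).mono_left
      (nhdsWithin_mono _ Set.Ioi_subset_Ici_self)
    have h2 : ∀ y, (ProbabilityTheory.cdf ν) y = F y := fun y => (congrFun hFeq y).symm
    simp only [h2] at h1
    exact h1.congr h2
  have hev : ∀ᶠ y in 𝓝[>] (sInf {y | u ≤ F y}), u ≤ F y := by
    refine eventually_nhdsWithin_of_forall (fun y hy => ?_)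
    obtain ⟨z, hz, hzy⟩ := exists_lt_of_csInf_lt hne hy
    exact hz.trans (hmono hzy.le)
  exact (ge_of_tendsto hrc hev).trans (hmono h)


/-- Rockafellar–Uryasev representation of Expected Shortfall: the function
`t ↦ t + (1-α)⁻¹ E[(Z-t)₊]` is convex, its infimum over `t` is
`ES_α(Z) = (1-α)⁻¹ ∫_α^1 F_Z⁻¹(u) du`, and the infimum is attained at the
left `α`-quantile. -/
theorem es_rockafellar_uryasev {Ω : Type*} [MeasurableSpace Ω]
    (μ : Measure Ω) [IsProbabilityMeasure μ]
    (Z : Ω → ℝ) (hZ : Integrable Z μ) (α : ℝ) (hα : α ∈ Set.Ioo (0:ℝ) 1) :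
    letI q : ℝ → ℝ := fun u => sInf {y : ℝ | u ≤ (μ {ω | Z ω ≤ y}).toReal}
    letI f : ℝ → ℝ := fun t => t + (1 - α)⁻¹ * ∫ ω, max (Z ω - t) 0 ∂μ
    ConvexOn ℝ Set.univ f ∧
      (⨅ t : ℝ, f t) = (1 - α)⁻¹ * ∫ u in α..1, q u ∧
      f (q α) = (1 - α)⁻¹ * ∫ u in α..1, q u := by
  obtain ⟨hα0, hα1⟩ := hα
  have h1α : (0:ℝ) < 1 - α := by linarith
  set q : ℝ → ℝ := fun u => sInf {y : ℝ | u ≤ (μ {ω | Z ω ≤ y}).toReal} with hqdef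
  set f : ℝ → ℝ := fun t => t + (1 - α)⁻¹ * ∫ ω, max (Z ω - t) 0 ∂μ with hfdef
  have hZm : AEMeasurable Z μ := hZ.1.aemeasurable
  set ν : Measure ℝ := μ.map Z with hν
  haveI : IsProbabilityMeasure ν := Measure.isProbabilityMeasure_map hZm
  -- the set defining q equals the cdf-set of ν
  have hFν : ∀ y, (μ {ω | Z ω ≤ y}).toReal = (ν (Set.Iic y)).toReal := by
    intro y
    rw [hν, Measure.map_apply_of_aemeasurable hZm measurableSet_Iic]
    rfl
  have hqν : ∀ u, q u = sInf {y : ℝ | u ≤ (ν (Set.Iic y)).toReal} := by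
    intro u
    rw [hqdef]
    refine congrArg sInf ?_
    ext y
    rw [Set.mem_setOf_eq, Set.mem_setOf_eq, hFν y]
  -- basic integrability
  have hg_int : ∀ t : ℝ, Integrable (fun ω => max (Z ω - t) 0) μ := fun t =>
    (hZ.sub (integrable_const t)).pos_part
  -- convexity
  have hgconv : ConvexOn ℝ Set.univ (fun t : ℝ => ∫ ω, max (Z ω - t) 0 ∂μ) := by
    refine ⟨convex_univ, fun x _ y _ a b ha hb hab => ?_⟩
    have hpt : ∀ ω, max (Z ω - (a • x + b • y)) 0
        ≤ a * max (Z ω - x) 0 + b * max (Z ω - y) 0 := by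
      intro ω
      have h1 : Z ω - (a • x + b • y) = a * (Z ω - x) + b * (Z ω - y) := by
        simp only [smul_eq_mul]; linear_combination (-(Z ω)) * hab
      rw [h1]
      calc max (a * (Z ω - x) + b * (Z ω - y)) 0
          ≤ max (a * (Z ω - x)) 0 + max (b * (Z ω - y)) 0 :=
            max_le (add_le_add (le_max_left _ _) (le_max_left _ _))
              (add_nonneg (le_max_right _ _) (le_max_right _ _))
        _ = a * max (Z ω - x) 0 + b * max (Z ω - y) 0 := by
            rw [mul_max_of_nonneg _ _ ha, mul_max_of_nonneg _ _ hb, mul_zero, mul_zero]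
    calc ∫ ω, max (Z ω - (a • x + b • y)) 0 ∂μ
        ≤ ∫ ω, (a * max (Z ω - x) 0 + b * max (Z ω - y) 0) ∂μ :=
          integral_mono (hg_int _) (((hg_int x).const_mul a).add ((hg_int y).const_mul b)) hpt
      _ = a • (∫ ω, max (Z ω - x) 0 ∂μ) + b • (∫ ω, max (Z ω - y) 0 ∂μ) := by
          rw [integral_add ((hg_int x).const_mul a) ((hg_int y).const_mul b),
            integral_const_mul, integral_const_mul]
          simp [smul_eq_mul]
  have hconv : ConvexOn ℝ Set.univ f := by
    rw [hfdef]
    have h1 : ConvexOn ℝ Set.univ (fun t : ℝ => t) := convexOn_id convex_univ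
    have h2 := hgconv.smul (le_of_lt (inv_pos.2 h1α) : (0:ℝ) ≤ (1 - α)⁻¹)
    exact h1.add (by simpa [smul_eq_mul] using h2)
  -- quantile facts
  have hiff : ∀ {u : ℝ}, 0 < u → u < 1 → ∀ s, (q u ≤ s ↔ u ≤ (ν (Set.Iic s)).toReal) := by
    intro u hu0 hu1 s
    rw [hqν u]
    exact (quantile_aux ν hu0 hu1).2.2 s
  have hqmonoOn : MonotoneOn q (Set.Ioo (0:ℝ) 1) := by
    intro u hu v hv huv
    rw [hqν u, hqν v]
    exact csInf_le_csInf (quantile_aux ν hu.1 hu.2).1 (quantile_aux ν hv.1 hv.2).2.1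
      (fun y hy => le_trans huv hy)
  have hqaem : AEMeasurable q (volume.restrict (Set.Ioo (0:ℝ) 1)) :=
    aemeasurable_restrict_of_monotoneOn measurableSet_Ioo hqmonoOn
  haveI hprob01 : IsProbabilityMeasure (volume.restrict (Set.Ioo (0:ℝ) 1)) := by
    constructor
    rw [Measure.restrict_apply_univ]
    simp [Real.volume_Ioo]
  -- pushforward of Lebesgue on (0,1) under q is the law of Z
  have hmap : (volume.restrict (Set.Ioo (0:ℝ) 1)).map q = ν := by
    haveI : IsProbabilityMeasure ((volume.restrict (Set.Ioo (0:ℝ) 1)).map q) :=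
      Measure.isProbabilityMeasure_map hqaem
    refine MeasureTheory.Measure.ext_of_Iic _ _ (fun s => ?_)
    rw [Measure.map_apply_of_aemeasurable hqaem measurableSet_Iic,
      Measure.restrict_apply' measurableSet_Ioo]
    have hset : q ⁻¹' (Set.Iic s) ∩ Set.Ioo 0 1
        = Set.Ioo (0:ℝ) 1 ∩ Set.Iic ((ν (Set.Iic s)).toReal) := by
      ext u
      simp only [Set.mem_inter_iff, Set.mem_preimage, Set.mem_Iic, Set.mem_Ioo]
      constructor
      · rintro ⟨hqs, hu0, hu1⟩
        exact ⟨⟨hu0, hu1⟩, (hiff hu0 hu1 s).1 hqs⟩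
      · rintro ⟨⟨hu0, hu1⟩, hus⟩
        exact ⟨(hiff hu0 hu1 s).2 hus, hu0, hu1⟩
    rw [hset]
    set c : ℝ := (ν (Set.Iic s)).toReal with hc
    have hc1 : c ≤ 1 := by
      rw [hc]
      exact ENNReal.toReal_le_of_le_ofReal one_pos.le (by simpa using prob_le_one)
    have hνc : ν (Set.Iic s) = ENNReal.ofReal c := (ENNReal.ofReal_toReal (measure_ne_top _ _)).symm
    rw [hνc]
    rcases lt_or_ge c 1 with hlt | hge
    · have heq : Set.Ioo (0:ℝ) 1 ∩ Set.Iic c = Set.Ioc 0 c := by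
        ext u
        simp only [Set.mem_inter_iff, Set.mem_Ioo, Set.mem_Iic, Set.mem_Ioc]
        exact ⟨fun h => ⟨h.1.1, h.2⟩, fun h => ⟨⟨h.1, lt_of_le_of_lt h.2 hlt⟩, h.2⟩⟩
      rw [heq, Real.volume_Ioc, sub_zero]
    · have hceq : c = 1 := le_antisymm hc1 hge
      have heq : Set.Ioo (0:ℝ) 1 ∩ Set.Iic c = Set.Ioo 0 1 := by
        rw [Set.inter_eq_left]
        exact fun u hu => le_trans hu.2.le (le_of_eq hceq.symm)
      rw [heq, Real.volume_Ioo, hceq]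
      norm_num
  -- integrability of q and of the positive parts
  have hid_int : Integrable (fun z : ℝ => z) ν := by
    rw [hν]
    exact (integrable_map_measure aestronglyMeasurable_id hZm).2 hZ
  have hq_int : Integrable q (volume.restrict (Set.Ioo (0:ℝ) 1)) :=
    (integrable_map_measure aestronglyMeasurable_id hqaem).1 (by rwa [hmap])
  have hq_int_t : ∀ t : ℝ, Integrable (fun u => max (q u - t) 0)
      (volume.restrict (Set.Ioo (0:ℝ) 1)) :=
    fun t => (hq_int.sub (integrable_const t)).pos_part
  -- transfer of the expectation
  have hGt : ∀ t : ℝ, ∫ ω, max (Z ω - t) 0 ∂μ = ∫ u in Set.Ioo (0:ℝ) 1, max (q u - t) 0 := by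
    intro t
    have hcont : Continuous (fun z : ℝ => max (z - t) 0) :=
      (continuous_id.sub continuous_const).max continuous_const
    have h1 : ∫ ω, max (Z ω - t) 0 ∂μ = ∫ z, max (z - t) 0 ∂ν := by
      rw [hν, integral_map hZm hcont.aestronglyMeasurable]
    have h2 : ∫ z, max (z - t) 0 ∂ν = ∫ u in Set.Ioo (0:ℝ) 1, max (q u - t) 0 := by
      rw [← hmap, integral_map hqaem (by rw [hmap]; exact hcont.aestronglyMeasurable)]
    rw [h1, h2]
  have hsub : Set.Ioo α 1 ⊆ Set.Ioo (0:ℝ) 1 := fun x hx => ⟨lt_trans hα0 hx.1, hx.2⟩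
  have hq_int_a1 : Integrable q (volume.restrict (Set.Ioo α 1)) :=
    hq_int.mono_measure (Measure.restrict_mono hsub le_rfl)
  have hvol : (volume (Set.Ioo α 1)).toReal = 1 - α := by
    rw [Real.volume_Ioo, ENNReal.toReal_ofReal h1α.le]
  set V : ℝ := (1 - α)⁻¹ * ∫ u in Set.Ioo α 1, q u with hV
  -- minimality
  have hmin : ∀ t, V ≤ f t := by
    intro t
    have e1 : ∫ u in Set.Ioo α 1, (q u - t) = (∫ u in Set.Ioo α 1, q u) - t * (1 - α) := by
      rw [integral_sub hq_int_a1 (integrable_const t), setIntegral_const, measureReal_def, hvol, smul_eq_mul,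
        mul_comm]
    have e2 : ∫ u in Set.Ioo α 1, (q u - t) ≤ ∫ u in Set.Ioo α 1, max (q u - t) 0 :=
      integral_mono (hq_int_a1.sub (integrable_const t))
        ((hq_int_t t).mono_measure (Measure.restrict_mono hsub le_rfl))
        (fun u => le_max_left _ _)
    have e3 : ∫ u in Set.Ioo α 1, max (q u - t) 0 ≤ ∫ u in Set.Ioo (0:ℝ) 1, max (q u - t) 0 :=
      setIntegral_mono_set (hq_int_t t) (Eventually.of_forall (fun u => le_max_right _ _))
        (HasSubset.Subset.eventuallyLE hsub)
    have key : (∫ u in Set.Ioo α 1, q u) - t * (1 - α)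
        ≤ ∫ u in Set.Ioo (0:ℝ) 1, max (q u - t) 0 := by linarith
    have h5 := mul_le_mul_of_nonneg_left key (inv_pos.2 h1α).le
    have e4 : (1 - α)⁻¹ * ((∫ u in Set.Ioo α 1, q u) - t * (1 - α))
        = (1 - α)⁻¹ * (∫ u in Set.Ioo α 1, q u) - t := by
      field_simp
    show V ≤ t + (1 - α)⁻¹ * ∫ ω, max (Z ω - t) 0 ∂μ
    rw [hGt t, hV]
    linarith [e4 ▸ h5]
  -- attainment
  have hqα_mem : α ∈ Set.Ioo (0:ℝ) 1 := ⟨hα0, hα1⟩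
  have hsplit : Set.Ioc (0:ℝ) α ∪ Set.Ioo α 1 = Set.Ioo (0:ℝ) 1 :=
    Set.Ioc_union_Ioo_eq_Ioo hα0.le hα1
  have hdisj : Disjoint (Set.Ioc (0:ℝ) α) (Set.Ioo α 1) := by
    rw [Set.disjoint_left]
    rintro x ⟨_, h1⟩ ⟨h2, _⟩
    exact absurd h2 (not_lt.2 h1)
  have hsub2 : Set.Ioc (0:ℝ) α ⊆ Set.Ioo (0:ℝ) 1 :=
    fun x hx => ⟨hx.1, lt_of_le_of_lt hx.2 hα1⟩
  have hzero : ∫ u in Set.Ioc (0:ℝ) α, max (q u - q α) 0 = 0 := by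
    refine setIntegral_eq_zero_of_forall_eq_zero (fun u hu => ?_)
    have hle : q u ≤ q α := hqmonoOn (hsub2 hu) hqα_mem hu.2
    simp [max_eq_right (sub_nonpos.2 hle)]
  have hpos : ∫ u in Set.Ioo α 1, max (q u - q α) 0 = ∫ u in Set.Ioo α 1, (q u - q α) :=
    setIntegral_congr_fun measurableSet_Ioo
      (fun u hu => max_eq_left (sub_nonneg.2 (hqmonoOn hqα_mem (hsub hu) hu.1.le)))
  have hGqα : ∫ u in Set.Ioo (0:ℝ) 1, max (q u - q α) 0
      = (∫ u in Set.Ioo α 1, q u) - q α * (1 - α) := by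
    rw [← hsplit, setIntegral_union hdisj measurableSet_Ioo
        ((hq_int_t (q α)).mono_measure (Measure.restrict_mono hsub2 le_rfl))
        ((hq_int_t (q α)).mono_measure (Measure.restrict_mono hsub le_rfl)),
      hzero, hpos, zero_add,
      integral_sub hq_int_a1 (integrable_const _), setIntegral_const, measureReal_def, hvol, smul_eq_mul,
      mul_comm]
  have hattain : f (q α) = V := by
    show q α + (1 - α)⁻¹ * ∫ ω, max (Z ω - q α) 0 ∂μ = V
    rw [hGt (q α), hGqα, hV]
    field_simp
    ring
  have hbddf : BddBelow (Set.range f) := ⟨V, by rintro _ ⟨t, rfl⟩; exact hmin t⟩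
  have hinf : (⨅ t : ℝ, f t) = V :=
    le_antisymm ((ciInf_le hbddf (q α)).trans hattain.le) (le_ciInf hmin)
  have hVfinal : V = (1 - α)⁻¹ * ∫ u in α..1, q u := by
    rw [hV, intervalIntegral.integral_of_le hα1.le, integral_Ioc_eq_integral_Ioo]
  have h2 : (⨅ t : ℝ, f t) = (1 - α)⁻¹ * ∫ u in α..1, q u := by rw [hinf, hVfinal]
  have h3 : f (q α) = (1 - α)⁻¹ * ∫ u in α..1, q u := by rw [hattain, hVfinal]
  exact ⟨hconv, h2, h3⟩
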